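/- Consider the coupled system ẋ̲ = −θ̄ x̲ − (θ̄ − θ̲)x̲⁻ + d̲, x̄̇ = −θ̄ x̄ + (θ̄ − θ̲)x̄⁺ + d̄, with 0 < θ̲ ≤ θ̄ < 2θ̲ and constants d̲ ≤ d̄. Then for any initial conditions the solutions x̲(t), x̄(t) remain bounded for all t ≥ 0. -/

import Mathlib

open Set

/-- If `f' t ≤ 0` whenever `f t ≥ C`, and `f 0 ≤ C`, then `f t ≤ C` for all `t ≥ 0`. -/
lemma invariant_aux {f f' : ℝ → ℝ} {C : ℝ}
    (hf : ∀ t ∈ Ici (0:ℝ), HasDerivWithinAt f (f' t) (Ici 0) t)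
    (h0 : f 0 ≤ C)
    (hC : ∀ t ∈ Ici (0:ℝ), C ≤ f t → f' t ≤ 0) :
    ∀ t ∈ Ici (0:ℝ), f t ≤ C := by
  intro T hT
  have hT0 : (0:ℝ) ≤ T := hT
  have hcont : ContinuousOn f (Icc 0 T) := fun t ht =>
    ((hf t ht.1).continuousWithinAt).mono (fun s hs => hs.1)
  have hf' : ∀ x ∈ Ico (0:ℝ) T, HasDerivWithinAt f (f' x) (Ici x) x := fun x hx =>
    (hf x hx.1).mono (Ici_subset_Ici.2 hx.1)
  have key : ∀ ε > (0:ℝ), f T ≤ C + ε * (1 + T) := by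
    intro ε hε
    have hB : ∀ x : ℝ, HasDerivAt (fun t => C + ε * (1 + t)) ε x := by
      intro x
      have h1 : HasDerivAt (fun t : ℝ => C + ε * (1 + t)) (ε * 1) x :=
        (((hasDerivAt_id x).const_add (1:ℝ)).const_mul ε).const_add C
      simpa using h1
    have bound : ∀ x ∈ Ico (0:ℝ) T, f x = C + ε * (1 + x) → f' x < ε := by
      intro x hx hfx
      have hx0 : (0:ℝ) ≤ x := hx.1
      have hCf : C ≤ f x := by nlinarith
      have := hC x hx0 hCf
      linarith
    have := image_le_of_deriv_right_lt_deriv_boundary hcont hf'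
      (by linarith) hB bound (Set.right_mem_Icc.2 hT0)
    exact this
  by_contra h
  push_neg at h
  have h1T : (0:ℝ) < 1 + T := by linarith
  have hε : (0:ℝ) < (f T - C) / (2 * (1 + T)) := div_pos (by linarith) (by linarith)
  have := key _ hε
  have h2 : (f T - C) / (2 * (1 + T)) * (1 + T) = (f T - C) / 2 := by
    field_simp
  rw [h2] at this
  linarith

theorem stmt12 (θl θu dl du : ℝ) (hθl : 0 < θl) (hθ : θl ≤ θu) (hθ2 : θu < 2 * θl)
    (hd : dl ≤ du) (xl xu : ℝ → ℝ)
    (hxl : ∀ t ∈ Ici (0 : ℝ),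
      HasDerivWithinAt xl (-θu * xl t - (θu - θl) * max (-(xl t)) 0 + dl) (Ici 0) t)
    (hxu : ∀ t ∈ Ici (0 : ℝ),
      HasDerivWithinAt xu (-θu * xu t + (θu - θl) * max (xu t) 0 + du) (Ici 0) t) :
    ∃ M : ℝ, ∀ t ∈ Ici (0 : ℝ), |xl t| ≤ M ∧ |xu t| ≤ M := by
  have hθu : 0 < θu := lt_of_lt_of_le hθl hθ
  set Cu : ℝ := max (xu 0) (|du| / θl) with hCu
  set Cu' : ℝ := max (-(xu 0)) (|du| / θu) with hCu'
  set Cl : ℝ := max (xl 0) (|dl| / θu) with hCl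
  set Cl' : ℝ := max (-(xl 0)) (|dl| / θl) with hCl'
  -- upper bound for xu
  have hu1 : ∀ t ∈ Ici (0:ℝ), xu t ≤ Cu := by
    apply invariant_aux hxu (le_max_left _ _)
    intro t _ hCt
    have hdiv : |du| / θl ≤ xu t := le_trans (le_max_right _ _) hCt
    have hx0 : (0:ℝ) ≤ xu t := le_trans (by positivity) hdiv
    have hdu : |du| ≤ θl * xu t := by
      rw [div_le_iff₀ hθl] at hdiv; linarith [mul_comm (xu t) θl]
    rw [max_eq_left hx0]
    have := le_abs_self du
    nlinarith
  -- lower bound for xu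
  have hu2 : ∀ t ∈ Ici (0:ℝ), -(xu t) ≤ Cu' := by
    apply invariant_aux (f' := fun t => -(-θu * xu t + (θu - θl) * max (xu t) 0 + du))
      (fun t ht => (hxu t ht).neg) (le_max_left _ _)
    intro t _ hCt
    have hdiv : |du| / θu ≤ -(xu t) := le_trans (le_max_right _ _) hCt
    have hx0 : xu t ≤ 0 := by
      have : (0:ℝ) ≤ |du| / θu := by positivity
      linarith
    have hdu : |du| ≤ θu * (-(xu t)) := by
      rw [div_le_iff₀ hθu] at hdiv; linarith [mul_comm (-(xu t)) θu]
    rw [max_eq_right hx0]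
    have := neg_abs_le du
    nlinarith
  -- upper bound for xl
  have hl1 : ∀ t ∈ Ici (0:ℝ), xl t ≤ Cl := by
    apply invariant_aux hxl (le_max_left _ _)
    intro t _ hCt
    have hdiv : |dl| / θu ≤ xl t := le_trans (le_max_right _ _) hCt
    have hx0 : (0:ℝ) ≤ xl t := le_trans (by positivity) hdiv
    have hdl : |dl| ≤ θu * xl t := by
      rw [div_le_iff₀ hθu] at hdiv; linarith [mul_comm (xl t) θu]
    have hneg : -(xl t) ≤ 0 := by linarith
    rw [max_eq_right hneg]
    have := le_abs_self dl
    nlinarith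
  -- lower bound for xl
  have hl2 : ∀ t ∈ Ici (0:ℝ), -(xl t) ≤ Cl' := by
    apply invariant_aux
      (f' := fun t => -(-θu * xl t - (θu - θl) * max (-(xl t)) 0 + dl))
      (fun t ht => (hxl t ht).neg) (le_max_left _ _)
    intro t _ hCt
    have hdiv : |dl| / θl ≤ -(xl t) := le_trans (le_max_right _ _) hCt
    have hpos : (0:ℝ) ≤ -(xl t) := le_trans (by positivity) hdiv
    have hdl : |dl| ≤ θl * (-(xl t)) := by
      rw [div_le_iff₀ hθl] at hdiv; linarith [mul_comm (-(xl t)) θl]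
    rw [max_eq_left hpos]
    have := neg_abs_le dl
    nlinarith
  refine ⟨max (max Cl Cl') (max Cu Cu'), fun t ht => ⟨?_, ?_⟩⟩
  · rw [abs_le]
    constructor
    · have := hl2 t ht
      have : -(xl t) ≤ max (max Cl Cl') (max Cu Cu') :=
        le_trans this (le_trans (le_max_right _ _) (le_max_left _ _))
      linarith
    · exact le_trans (hl1 t ht) (le_trans (le_max_left _ _) (le_max_left _ _))
  · rw [abs_le]
    constructor
    · have := hu2 t ht
      have : -(xu t) ≤ max (max Cl Cl') (max Cu Cu') :=
        le_trans this (le_trans (le_max_right _ _) (le_max_right _ _))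
      linarith
    · exact le_trans (hu1 t ht) (le_trans (le_max_left _ _) (le_max_right _ _))
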